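/- arXiv:2203.00609 — 3 statements merged into one kernel-verified Lean document; each statement's English description precedes it below -/
import Mathlib

section
/- For positive rates β, γ, ε, θ, ψ with β > γ and α ∈ [0,1], if k₀ := -(β - γ)(γ + ψ + θ) + β(ψ + θ)α is positive, then k₁ := ε(2γ + ψ + θ) + γ(2(γ + ψ) + θ) - β(ε + γ + ψ - ψα) is also positive. -/
theorem k0_pos_imp_k1_pos (β γ ε θ ψ α : ℝ)
    (hβ : 0 < β) (hγ : 0 < γ) (hε : 0 < ε) (hθ : 0 < θ) (hψ : 0 < ψ)
    (hβγ : γ < β) (hα : α ∈ Set.Icc (0:ℝ) 1)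
    (hk0 : 0 < -(β - γ) * (γ + ψ + θ) + β * (ψ + θ) * α) :
    0 < ε * (2 * γ + ψ + θ) + γ * (2 * (γ + ψ) + θ) - β * (ε + γ + ψ - ψ * α) := by
  obtain ⟨h0, h1⟩ := hα
  nlinarith [mul_le_of_le_one_right (le_of_lt (mul_pos hβ hθ)) h1,
    mul_le_of_le_one_right (le_of_lt (mul_pos hβ (add_pos hψ hθ))) h1,
    mul_pos hε hγ, mul_pos hγ hψ, mul_pos hγ hγ, mul_pos hε (sub_pos.mpr hβγ)]
end

section
/- For positive rates β, γ, ε, θ, ψ and α ∈ [0,1], if k₁ := ε(2γ + ψ + θ) + γ(2(γ + ψ) + θ) - β(ε + γ + ψ - ψα) is positive, then k₂ := -βε + ε² + γ(γ + ψ) + ε(4γ + 2ψ + θ) is also positive. -/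
theorem k1_pos_imp_k2_pos (β γ ε θ ψ α : ℝ)
    (hβ : 0 < β) (hγ : 0 < γ) (hε : 0 < ε) (hθ : 0 < θ) (hψ : 0 < ψ)
    (hα : α ∈ Set.Icc (0:ℝ) 1)
    (hk1 : 0 < ε * (2 * γ + ψ + θ) + γ * (2 * (γ + ψ) + θ) - β * (ε + γ + ψ - ψ * α)) :
    0 < -β * ε + ε ^ 2 + γ * (γ + ψ) + ε * (4 * γ + 2 * ψ + θ) := by
  obtain ⟨h0, h1⟩ := hα
  nlinarith [mul_pos hε hk1, mul_pos hγ hk1,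
    mul_pos (mul_pos hβ hψ) (by linarith : (0:ℝ) < ψ),
    mul_nonneg (mul_nonneg hψ.le hk1.le) (sub_nonneg.2 h1),
    mul_nonneg (mul_nonneg (mul_nonneg hβ.le hψ.le) (sub_nonneg.2 h1)) hε.le,
    mul_nonneg (mul_nonneg (mul_nonneg hβ.le hψ.le) (sub_nonneg.2 h1)) hγ.le,
    mul_pos hε hγ, mul_pos hγ hθ, mul_pos hε hθ, sq_nonneg (ε - γ), sq_nonneg (ε + γ)]
end

section
/- Fix γ, ε, α, and tracing parameters so that θ = p_E·α·β and ψ = p_I·α·β with fixed probabilities p_E, p_I ∈ (0,1], p_E + p_I ≤ 1, and α ∈ (0,1). Then the controllability condition α - (1 + γ/(αβ(p_E+p_I)))·(1 - γ/β) > 0 fails for all sufficiently large β; i.e., there exists B such that for all β > B the condition is false. -/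
theorem high_transmissibility_uncontrollable (γ α pE pI : ℝ)
    (hγ : 0 < γ) (hα : α ∈ Set.Ioo (0:ℝ) 1)
    (hpE : pE ∈ Set.Ioc (0:ℝ) 1) (hpI : pI ∈ Set.Ioc (0:ℝ) 1)
    (hsum : pE + pI ≤ 1) :
    ∃ B : ℝ, ∀ β : ℝ, B < β →
      ¬ (0 < α - (1 + γ / (α * β * (pE + pI))) * (1 - γ / β)) := by
  obtain ⟨hα0, hα1⟩ := hα
  obtain ⟨hpE0, _⟩ := hpE
  obtain ⟨hpI0, _⟩ := hpI
  refine ⟨γ / (1 - α), fun β hβ => ?_⟩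
  have h1α : 0 < 1 - α := by linarith
  have hβ0 : 0 < β := (div_pos hγ h1α).trans hβ
  have hlt : γ < β * (1 - α) := (div_lt_iff₀ h1α).mp hβ
  have hγβ : γ / β < 1 - α := (div_lt_iff₀ hβ0).mpr (by nlinarith)
  have hα' : α < 1 - γ / β := by linarith
  have hpos : 0 ≤ γ / (α * β * (pE + pI)) := by positivity
  have hprod : 1 - γ / β ≤ (1 + γ / (α * β * (pE + pI))) * (1 - γ / β) := by
    nlinarith
  push_neg
  nlinarith
end
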